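/- (Truncation operator bounds) Let X be a Banach space with biorthogonal system, α > 0, x ∈ X with Λ_α = {n : |e_n^*(x)| > α} finite, and define T_α x = ∑_{n∈Λ_α} α·sgn(e_n^*(x)) e_n + (x − P_{Λ_α} x). If ‖x − P_Γ x‖ ≤ g^c‖x‖ for every greedy set Γ of x with |Γ| ≤ |Λ_α|, then ‖T_α x‖ ≤ g^c‖x‖; and if ‖P_Γ x‖ ≤ g‖x‖ for every such greedy set, then ‖x − T_α x‖ ≤ g‖x‖. -/

import Mathlib

set_option maxHeartbeats 1000000

open MeasureTheory Set intervalIntegral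

/-- Lemma 3 of the paper: for `α > 0` with `Λ_α = {n : |e_n^*(x)| > α}` finite and the
truncation `T_α x = ∑_{n∈Λ_α} α·sgn(e_n^*(x)) e_n + (x - P_{Λ_α} x)`: if
`‖x - P_Γ x‖ ≤ g^c‖x‖` for every greedy set `Γ` of `x` with `|Γ| ≤ |Λ_α|` then
`‖T_α x‖ ≤ g^c‖x‖`; and if `‖P_Γ x‖ ≤ g‖x‖` for every such greedy set then
`‖x - T_α x‖ ≤ g‖x‖`. -/
theorem stmt_19 {X : Type*} [NormedAddCommGroup X] [NormedSpace ℝ X] [CompleteSpace X]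
    (e : ℕ → X) (f : ℕ → X →L[ℝ] ℝ)
    (hbi : ∀ m n, f m (e n) = if m = n then 1 else 0)
    (α : ℝ) (hα : 0 < α) (x : X) (Λα : Finset ℕ)
    (hΛα : ∀ n, n ∈ Λα ↔ α < |f n x|)
    (T : X)
    (hT : T = (∑ n ∈ Λα, (α * (f n x / |f n x|)) • e n)
        + (x - ∑ n ∈ Λα, f n x • e n))
    (g gc : ℝ) :
    ((∀ Γ : Finset ℕ, Γ.card ≤ Λα.card →
        (∀ n ∈ Γ, ∀ m ∉ Γ, |f m x| ≤ |f n x|) →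
        ‖x - ∑ n ∈ Γ, f n x • e n‖ ≤ gc * ‖x‖) → ‖T‖ ≤ gc * ‖x‖) ∧
    ((∀ Γ : Finset ℕ, Γ.card ≤ Λα.card →
        (∀ n ∈ Γ, ∀ m ∉ Γ, |f m x| ≤ |f n x|) →
        ‖∑ n ∈ Γ, f n x • e n‖ ≤ g * ‖x‖) → ‖x - T‖ ≤ g * ‖x‖) := by
  have hfx : ∀ n ∈ Λα, α < |f n x| := fun n hn => (hΛα n).1 hn
  -- the step function s ↦ P_{Λ(s)} x
  set G : ℝ → X := fun s =>
    ∑ n ∈ Λα, Set.indicator (Set.Ioi (α / |f n x|)) (fun _ => f n x • e n) s with hG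
  have hint : ∀ n ∈ Λα, IntervalIntegrable
      (fun s => Set.indicator (Set.Ioi (α / |f n x|)) (fun _ => f n x • e n) s) volume 0 1 := by
    intro n hn
    rw [intervalIntegrable_iff_integrableOn_Ioc_of_le zero_le_one]
    exact (integrableOn_const measure_Ioc_lt_top.ne).indicator measurableSet_Ioi
  have hGint : IntervalIntegrable G volume 0 1 := by
    have h2 : G = ∑ n ∈ Λα,
        fun s => Set.indicator (Set.Ioi (α / |f n x|)) (fun _ => f n x • e n) s := by
      ext s
      rw [hG, Finset.sum_apply]
    rw [h2]
    exact IntervalIntegrable.sum _ hint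
  have hIG : ∫ s in (0:ℝ)..1, G s
      = ∑ n ∈ Λα, (f n x - α * (f n x / |f n x|)) • e n := by
    rw [hG]
    rw [intervalIntegral.integral_finset_sum hint]
    refine Finset.sum_congr rfl fun n hn => ?_
    have hv : α < |f n x| := hfx n hn
    have hv0 : 0 < |f n x| := hα.trans hv
    have hc0 : 0 < α / |f n x| := div_pos hα hv0
    have hc1 : α / |f n x| < 1 := (div_lt_one hv0).2 hv
    rw [intervalIntegral.integral_of_le zero_le_one,
      MeasureTheory.setIntegral_indicator measurableSet_Ioi]
    have hset : Set.Ioc (0:ℝ) 1 ∩ Set.Ioi (α / |f n x|) = Set.Ioc (α / |f n x|) 1 := by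
      ext s
      simp only [Set.mem_inter_iff, Set.mem_Ioc, Set.mem_Ioi]
      constructor
      · rintro ⟨⟨_, h1⟩, h2⟩; exact ⟨h2, h1⟩
      · rintro ⟨h1, h2⟩; exact ⟨⟨hc0.trans h1, h2⟩, h1⟩
    rw [hset, MeasureTheory.setIntegral_const, Real.volume_real_Ioc_of_le (by linarith),
      smul_smul]
    congr 1
    field_simp
  -- each value of G on (0,1] is a greedy projection
  have key : ∀ s ∈ Set.Ioc (0:ℝ) 1, ∃ Γ : Finset ℕ, Γ.card ≤ Λα.card ∧
      (∀ n ∈ Γ, ∀ m ∉ Γ, |f m x| ≤ |f n x|) ∧ G s = ∑ n ∈ Γ, f n x • e n := by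
    intro s hs
    refine ⟨Λα.filter (fun n => α / |f n x| < s),
      Finset.card_le_card (Finset.filter_subset _ _), ?_, ?_⟩
    · intro n hn m hm
      simp only [Finset.mem_filter] at hn hm
      have hn1 : α < |f n x| := hfx n hn.1
      have hn0 : 0 < |f n x| := hα.trans hn1
      have hns : α / s < |f n x| := by
        rw [div_lt_iff₀ hs.1]
        have := (div_lt_iff₀ hn0).1 hn.2
        linarith [mul_comm s |f n x|, this]
      have hms : |f m x| ≤ α / s := by
        by_cases hmΛ : m ∈ Λα
        · have h1 : ¬ α / |f m x| < s := fun h => hm ⟨hmΛ, h⟩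
          push_neg at h1
          have hm0 : 0 < |f m x| := hα.trans (hfx m hmΛ)
          rw [le_div_iff₀ hm0] at h1
          rw [le_div_iff₀ hs.1]
          linarith [mul_comm s |f m x|]
        · have h1 : |f m x| ≤ α := le_of_not_gt (fun h => hmΛ ((hΛα m).2 h))
          refine h1.trans ?_
          rw [le_div_iff₀ hs.1]
          nlinarith [hs.2, hα.le]
      linarith
    · rw [hG]
      simp only
      rw [Finset.sum_filter]
      refine Finset.sum_congr rfl fun n hn => ?_
      by_cases h : α / |f n x| < s <;>
        simp [Set.indicator_apply, Set.mem_Ioi, h]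
  constructor
  · intro H
    have hTint : ∫ s in (0:ℝ)..1, (x - G s) = T := by
      rw [intervalIntegral.integral_sub intervalIntegrable_const hGint,
        intervalIntegral.integral_const, hIG, hT]
      simp only [sub_smul, Finset.sum_sub_distrib, sub_zero, one_smul]
      abel
    calc ‖T‖ = ‖∫ s in (0:ℝ)..1, (x - G s)‖ := by rw [hTint]
      _ ≤ gc * ‖x‖ * |1 - 0| := by
          refine intervalIntegral.norm_integral_le_of_norm_le_const fun s hs => ?_
          rw [Set.uIoc_of_le zero_le_one] at hs
          obtain ⟨Γ, h1, h2, h3⟩ := key s hs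
          rw [h3]
          exact H Γ h1 h2
      _ = gc * ‖x‖ := by norm_num
  · intro H
    have hTint : ∫ s in (0:ℝ)..1, G s = x - T := by
      rw [hIG, hT]
      simp only [sub_smul, Finset.sum_sub_distrib]
      abel
    calc ‖x - T‖ = ‖∫ s in (0:ℝ)..1, G s‖ := by rw [hTint]
      _ ≤ g * ‖x‖ * |1 - 0| := by
          refine intervalIntegral.norm_integral_le_of_norm_le_const fun s hs => ?_
          rw [Set.uIoc_of_le zero_le_one] at hs
          obtain ⟨Γ, h1, h2, h3⟩ := key s hs
          rw [h3]
          exact H Γ h1 h2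
      _ = g * ‖x‖ := by norm_num
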